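/- Let n, R ≥ 1 be natural numbers. Then there exist natural numbers h_1 < h_2 < ⋯ < h_R such that the following holds: for any permutations σ_1, …, σ_R of {1, …, n}, there exist finite nonempty subsets A_1, …, A_n of ℤ such that for each 1 ≤ r ≤ R and all 1 ≤ j, k ≤ n, one has |h_r A_j| < |h_r A_k| if and only if σ_r(j) < σ_r(k). -/

import Mathlib

open Pointwise

open Finset

namespace ItSum

def D (n R : ℕ) : ℕ := n * R + n
def C0 (n R : ℕ) : ℕ := 2^R * ((R+1)^R * R^R) * (D n R)^R
def Q (n R : ℕ) : ℕ := 2^R * C0 n R + 2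
def Amax (n R : ℕ) : ℕ := Q n R ^ (2^R)
def bb (n R : ℕ) : ℕ := R * Amax n R + 1
def NN (n R : ℕ) : ℕ := R * bb n R + R * Amax n R + 1

lemma D_ge (n R : ℕ) (hn : 1 ≤ n) : 1 ≤ D n R := by
  unfold D; omega

lemma D_add_two_le_Q (n R : ℕ) (hn : 1 ≤ n) (hR : 1 ≤ R) : D n R + 2 ≤ Q n R := by
  have h1 : D n R ≤ (D n R)^R := Nat.le_self_pow (by omega) _
  have h2 : 1 ≤ 2^R := Nat.one_le_two_pow
  have h3 : 1 ≤ (R+1)^R * R^R :=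
    Nat.one_le_iff_ne_zero.mpr (Nat.mul_ne_zero (pow_ne_zero _ (by omega)) (pow_ne_zero _ (by omega)))
  have h4 : D n R ≤ C0 n R := by
    calc D n R ≤ (D n R)^R := h1
    _ = 1 * (1 * (D n R)^R) := by ring
    _ ≤ 2^R * ((R+1)^R * R^R * (D n R)^R) := by
        apply Nat.mul_le_mul h2
        exact Nat.mul_le_mul h3 (le_refl _)
    _ = C0 n R := by unfold C0; ring
  have h5 : C0 n R ≤ 2^R * C0 n R := Nat.le_mul_of_pos_left _ (by omega)
  unfold Q; omega

lemma Q_ge_two (n R : ℕ) : 2 ≤ Q n R := by unfold Q; omega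

lemma digits_inj {B : ℕ} : ∀ {m : ℕ} (z z' : Fin m → ℕ), (∀ s, z s < B) → (∀ s, z' s < B) →
    (∑ s, B^(s.val) * z s = ∑ s, B^(s.val) * z' s) → z = z' := by
  intro m
  induction m with
  | zero => intro z z' _ _ _; funext s; exact s.elim0
  | succ m ih =>
    intro z z' hz hz' h
    have hB : 0 < B := Nat.pos_of_ne_zero (by intro e; subst e; exact Nat.not_lt_zero _ (hz 0))
    rw [Fin.sum_univ_succ, Fin.sum_univ_succ] at h
    have e : ∀ (w : Fin (m+1) → ℕ), ∑ s : Fin m, B^((Fin.succ s).val) * w (Fin.succ s)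
        = B * ∑ s : Fin m, B^(s.val) * w (Fin.succ s) := by
      intro w
      rw [Finset.mul_sum]
      apply Finset.sum_congr rfl
      intro s _
      rw [Fin.val_succ, pow_succ]
      ring
    rw [e z, e z'] at h
    simp only [Fin.val_zero, pow_zero, one_mul] at h
    have h0 : z 0 = z' 0 := by
      have m1 : z 0 = (z 0 + B * ∑ s : Fin m, B^(s.val) * z (Fin.succ s)) % B := by
        rw [Nat.add_mul_mod_self_left, Nat.mod_eq_of_lt (hz 0)]
      have m2 : z' 0 = (z' 0 + B * ∑ s : Fin m, B^(s.val) * z' (Fin.succ s)) % B := by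
        rw [Nat.add_mul_mod_self_left, Nat.mod_eq_of_lt (hz' 0)]
      rw [m1, m2, h]
    have hX : ∑ s : Fin m, B^(s.val) * z (Fin.succ s) = ∑ s : Fin m, B^(s.val) * z' (Fin.succ s) := by
      have d1 : (z 0 + B * ∑ s : Fin m, B^(s.val) * z (Fin.succ s)) / B
          = ∑ s : Fin m, B^(s.val) * z (Fin.succ s) := by
        rw [Nat.add_mul_div_left _ _ hB, Nat.div_eq_of_lt (hz 0), Nat.zero_add]
      have d2 : (z' 0 + B * ∑ s : Fin m, B^(s.val) * z' (Fin.succ s)) / B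
          = ∑ s : Fin m, B^(s.val) * z' (Fin.succ s) := by
        rw [Nat.add_mul_div_left _ _ hB, Nat.div_eq_of_lt (hz' 0), Nat.zero_add]
      rw [← d1, ← d2, h]
    have tail := ih (fun s => z (Fin.succ s)) (fun s => z' (Fin.succ s))
      (fun s => hz _) (fun s => hz' _) hX
    funext s
    refine Fin.cases h0 (fun i => ?_) s
    exact congrFun tail i


section Sigma
variable {n R : ℕ} (σ : Fin R → Equiv.Perm (Fin n))

def T (n R : ℕ) (s : Fin R) : ℕ := Q n R ^ (2^(s.val))
def g (j : Fin n) (r : ℕ) : ℕ :=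
  n * (R - r) + (if h : r - 1 < R then ((σ ⟨r-1, h⟩) j : ℕ) else 0)
def dd (j : Fin n) (s : Fin R) : ℕ := g σ j (R - s.val) - g σ j (R - s.val + 1)
def aa (j : Fin n) (s : Fin R) : ℕ := T n R s + dd σ j s

lemma g_le (j : Fin n) (r : ℕ) : g σ j r ≤ n * R + n := by
  unfold g
  have : n * (R - r) ≤ n * R := Nat.mul_le_mul_left _ (Nat.sub_le _ _)
  split
  · have : ((σ ⟨r-1, by omega⟩) j : ℕ) < n := Fin.is_lt _
    omega
  · omega

lemma g_anti (j : Fin n) (r : ℕ) : g σ j (r+1) ≤ g σ j r := by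
  unfold g
  by_cases hR : r < R
  · have h1 : r - 1 < R := by omega
    have h2 : r + 1 - 1 < R := by omega
    rw [dif_pos h1, dif_pos h2]
    have a1 : ((σ ⟨r-1, h1⟩) j : ℕ) < n := Fin.is_lt _
    have a2 : ((σ ⟨r+1-1, h2⟩) j : ℕ) < n := Fin.is_lt _
    have e : R - r = R - (r+1) + 1 := by omega
    rw [e, Nat.mul_add, Nat.mul_one]
    omega
  · rw [dif_neg (by omega : ¬ (r + 1 - 1 < R))]
    have e : R - (r+1) = 0 := by omega
    rw [e, Nat.mul_zero]
    exact Nat.zero_le _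

lemma g_anti' (j : Fin n) {r r' : ℕ} (h : r ≤ r') : g σ j r' ≤ g σ j r := by
  induction r' with
  | zero => have : r = 0 := by omega
            subst this; exact le_refl _
  | succ k ih =>
    rcases Nat.lt_succ_iff_lt_or_eq.mp (Nat.lt_succ_of_le h) with h' | h'
    · exact le_trans (g_anti σ j k) (ih (by omega))
    · subst h'; exact le_refl _

lemma g_top (j : Fin n) : g σ j (R + 1) = 0 := by
  unfold g
  rw [dif_neg (by omega)]
  have e : R - (R+1) = 0 := by omega
  rw [e, Nat.mul_zero]


lemma dd_le (j : Fin n) (s : Fin R) : dd σ j s ≤ D n R := by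
  unfold dd D
  have := g_le σ j (R - s.val)
  omega

lemma aa_le_Amax (j : Fin n) (s : Fin R) : aa σ j s ≤ Amax n R := by
  have hn : 1 ≤ n := by
    rcases Nat.eq_zero_or_pos n with h | h
    · subst h; exact j.elim0
    · exact h
  have hR : 1 ≤ R := by
    rcases Nat.eq_zero_or_pos R with h | h
    · subst h; exact s.elim0
    · exact h
  have hQ1 : 1 ≤ Q n R := le_trans (by norm_num) (Q_ge_two n R)
  have h1 : 2^(s.val) ≤ 2^(R-1) := Nat.pow_le_pow_right (by norm_num) (by omega)
  have h2 : Q n R ^(2^(s.val)) ≤ Q n R^(2^(R-1)) := Nat.pow_le_pow_right hQ1 h1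
  have hD : D n R + 2 ≤ Q n R := D_add_two_le_Q n R hn hR
  have hp : 1 ≤ Q n R^(2^(R-1)) := Nat.one_le_pow _ _ (by omega)
  have h3 : Q n R^(2^(R-1)) + D n R ≤ Q n R^(2^(R-1)) * Q n R := by
    calc Q n R^(2^(R-1)) + D n R
        ≤ Q n R^(2^(R-1)) * 2 + D n R * Q n R^(2^(R-1)) := by
          have : Q n R^(2^(R-1)) * 1 ≤ Q n R^(2^(R-1)) * 2 := by
            apply Nat.mul_le_mul_left; omega
          have h' : D n R * 1 ≤ D n R * Q n R^(2^(R-1)) := by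
            apply Nat.mul_le_mul_left; omega
          omega
    _ = Q n R^(2^(R-1)) * (D n R + 2) := by ring
    _ ≤ Q n R^(2^(R-1)) * Q n R := Nat.mul_le_mul_left _ hD
  have h4 : Q n R^(2^(R-1)) * Q n R = Q n R^(2^(R-1)+1) := (pow_succ _ _).symm
  have h5 : Q n R^(2^(R-1)+1) ≤ Q n R^(2^R) := by
    apply Nat.pow_le_pow_right hQ1
    have e : 2^R = 2 * 2^(R-1) := by
      conv_lhs => rw [show R = (R-1)+1 by omega]
      rw [pow_succ]; ring
    have : 1 ≤ 2^(R-1) := Nat.one_le_two_pow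
    omega
  unfold aa T Amax
  have := dd_le σ j s
  omega

def MM (R h : ℕ) : Finset (Fin R → ℕ) :=
  (Fintype.piFinset fun _ : Fin R => Finset.range (h+1)).filter fun i => ∑ s, i s ≤ h

def ψ (n : ℕ) {R : ℕ} (i y : Fin R → ℕ) : ℤ :=
  ((∑ s, (NN n R)^(s.val) * (i s * bb n R + y s) : ℕ) : ℤ)

def SS (j : Fin n) (h : ℕ) : Finset ℤ :=
  (MM R h).biUnion fun i =>
    (Fintype.piFinset fun s => Finset.range (i s * aa σ j s + 1)).image (ψ n i)

lemma mem_SS {j : Fin n} {h : ℕ} {x : ℤ} :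
    x ∈ SS σ j h ↔ ∃ i y : Fin R → ℕ, (∑ s, i s ≤ h) ∧ (∀ s, y s ≤ i s * aa σ j s) ∧ x = ψ n i y := by
  unfold SS MM
  simp only [Finset.mem_biUnion, Finset.mem_filter, Fintype.mem_piFinset, Finset.mem_range,
    Finset.mem_image]
  constructor
  · rintro ⟨i, ⟨-, hsum⟩, y, hy, rfl⟩
    exact ⟨i, y, hsum, fun s => by have := hy s; omega, rfl⟩
  · rintro ⟨i, y, hsum, hy, rfl⟩
    refine ⟨i, ⟨fun s => ?_, hsum⟩, y, fun s => by have := hy s; omega, rfl⟩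
    have : i s ≤ ∑ s', i s' := Finset.single_le_sum (f := fun s' => i s') (fun _ _ => Nat.zero_le _) (mem_univ s)
    omega

lemma psi_add (i i' y y' : Fin R → ℕ) :
    ψ n (fun s => i s + i' s) (fun s => y s + y' s) = ψ n i y + ψ n i' y' := by
  unfold ψ
  rw [← Nat.cast_add]
  congr 1
  rw [← Finset.sum_add_distrib]
  apply Finset.sum_congr rfl
  intro s _
  ring


lemma psi_zero : ψ n (fun _ : Fin R => 0) (fun _ => 0) = 0 := by
  unfold ψ
  simp

lemma psi_extract (j : Fin n) {i i' y y' : Fin R → ℕ}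
    (hi : ∀ s, i s ≤ R) (hi' : ∀ s, i' s ≤ R)
    (hy : ∀ s, y s ≤ i s * aa σ j s) (hy' : ∀ s, y' s ≤ i' s * aa σ j s)
    (heq : ψ n i y = ψ n i' y') : i = i' ∧ y = y' := by
  have hnat : (∑ s, (NN n R)^(s.val) * (i s * bb n R + y s))
      = ∑ s, (NN n R)^(s.val) * (i' s * bb n R + y' s) := by
    unfold ψ at heq
    exact_mod_cast heq
  have hbnd : ∀ (i₀ y₀ : Fin R → ℕ), (∀ s, i₀ s ≤ R) → (∀ s, y₀ s ≤ i₀ s * aa σ j s) →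
      ∀ s, i₀ s * bb n R + y₀ s < NN n R := by
    intro i₀ y₀ h1 h2 s
    have e1 : i₀ s * bb n R ≤ R * bb n R := Nat.mul_le_mul_right _ (h1 s)
    have e2 : y₀ s ≤ R * Amax n R :=
      le_trans (h2 s) (Nat.mul_le_mul (h1 s) (aa_le_Amax σ j s))
    unfold NN
    omega
  have hz := digits_inj _ _ (hbnd i y hi hy) (hbnd i' y' hi' hy') hnat
  have hyb : ∀ s, y s < bb n R := by
    intro s
    have := le_trans (hy s) (Nat.mul_le_mul (hi s) (aa_le_Amax σ j s))
    unfold bb; omega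
  have hyb' : ∀ s, y' s < bb n R := by
    intro s
    have := le_trans (hy' s) (Nat.mul_le_mul (hi' s) (aa_le_Amax σ j s))
    unfold bb; omega
  have hbbpos : 0 < bb n R := by unfold bb; omega
  have key : ∀ s, i s = i' s ∧ y s = y' s := by
    intro s
    have hzs : i s * bb n R + y s = i' s * bb n R + y' s := congrFun hz s
    have d1 : (i s * bb n R + y s) / bb n R = i s := by
      rw [Nat.add_comm, Nat.add_mul_div_right _ _ hbbpos, Nat.div_eq_of_lt (hyb s)]
      omega
    have d2 : (i' s * bb n R + y' s) / bb n R = i' s := by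
      rw [Nat.add_comm, Nat.add_mul_div_right _ _ hbbpos, Nat.div_eq_of_lt (hyb' s)]
      omega
    have hii : i s = i' s := by rw [← d1, ← d2, hzs]
    constructor
    · exact hii
    · rw [hii] at hzs; omega
  exact ⟨funext fun s => (key s).1, funext fun s => (key s).2⟩

lemma SS_add {j : Fin n} {h : ℕ} (hh : h + 1 ≤ R) :
    SS σ j h + SS σ j 1 = SS σ j (h+1) := by
  apply Finset.Subset.antisymm
  · intro x hx
    rw [Finset.mem_add] at hx
    obtain ⟨u, hu, v, hv, rfl⟩ := hx
    obtain ⟨i, y, hsum, hy, rfl⟩ := (mem_SS σ).mp hu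
    obtain ⟨i', y', hsum', hy', rfl⟩ := (mem_SS σ).mp hv
    apply (mem_SS σ).mpr
    refine ⟨fun s => i s + i' s, fun s => y s + y' s, ?_, ?_, (psi_add i i' y y').symm⟩
    · rw [Finset.sum_add_distrib]; omega
    · intro s
      show y s + y' s ≤ (i s + i' s) * aa σ j s
      have b1 := hy s; have b2 := hy' s
      have b3 : (i s + i' s) * aa σ j s = i s * aa σ j s + i' s * aa σ j s := Nat.add_mul _ _ _
      omega
  · intro x hx
    obtain ⟨i, y, hsum, hy, rfl⟩ := (mem_SS σ).mp hx
    by_cases hc : ∑ s, i s ≤ h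
    · rw [Finset.mem_add]
      refine ⟨ψ n i y, (mem_SS σ).mpr ⟨i, y, hc, hy, rfl⟩, 0,
        (mem_SS σ).mpr ⟨fun _ => 0, fun _ => 0, by simp, by simp, psi_zero.symm⟩, by ring⟩
    · -- ∑ i = h + 1 ≥ 1
      have hsum1 : ∑ s, i s = h + 1 := by omega
      have hex : ∃ s₀ ∈ (univ : Finset (Fin R)), i s₀ ≠ 0 := by
        apply Finset.exists_ne_zero_of_sum_ne_zero
        omega
      obtain ⟨s₀, -, hs₀⟩ := hex
      set A0 := aa σ j s₀ with hA0
      set i₁ := Function.update i s₀ (i s₀ - 1) with hi₁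
      set y₁ := Function.update y s₀ (min (y s₀) ((i s₀ - 1) * A0)) with hy₁
      set t := y s₀ - (i s₀ - 1) * A0 with ht
      have hia : i s₀ * A0 = (i s₀ - 1) * A0 + A0 := by
        have := Nat.sub_one_mul (i s₀) A0
        have h2 : A0 ≤ i s₀ * A0 := Nat.le_mul_of_pos_left _ (by omega)
        omega
      have htA : t ≤ A0 := by
        have h1 := hy s₀
        rw [← hA0] at h1
        omega
      have c1 : ∀ s, i₁ s + (if s = s₀ then 1 else 0) = i s := by
        intro s
        by_cases hss : s = s₀
        · subst hss; rw [hi₁]; simp [Function.update_self]; omega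
        · rw [hi₁]; simp [Function.update_of_ne hss, hss]
      have c2 : ∀ s, y₁ s + (if s = s₀ then t else 0) = y s := by
        intro s
        by_cases hss : s = s₀
        · subst hss; rw [hy₁, ht]; simp [Function.update_self]; omega
        · rw [hy₁]; simp [Function.update_of_ne hss, hss]
      have c3 : ∑ s, i₁ s ≤ h := by
        have e1 : ∑ s, i₁ s = (i s₀ - 1) + ∑ s ∈ univ \ {s₀}, i s := by
          rw [hi₁]; exact Finset.sum_update_of_mem (mem_univ s₀) i (i s₀ - 1)
        have e2 : ∑ s, i s = i s₀ + ∑ s ∈ univ.erase s₀, i s := (Finset.add_sum_erase _ _ (mem_univ s₀)).symm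
        rw [← Finset.erase_eq] at e1
        omega
      have c4 : ∀ s, y₁ s ≤ i₁ s * aa σ j s := by
        intro s
        by_cases hss : s = s₀
        · subst hss
          rw [hy₁, hi₁, ← hA0]
          simp only [Function.update_self]
          exact min_le_right _ _
        · rw [hy₁, hi₁]; simp [Function.update_of_ne hss]
          exact hy s
      rw [Finset.mem_add]
      refine ⟨ψ n i₁ y₁, (mem_SS σ).mpr ⟨i₁, y₁, c3, c4, rfl⟩,
        ψ n (fun s => if s = s₀ then 1 else 0) (fun s => if s = s₀ then t else 0),
        (mem_SS σ).mpr ⟨_, _, ?_, ?_, rfl⟩, ?_⟩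
      · simp
      · intro s
        by_cases hss : s = s₀
        · subst hss; simp [← hA0, htA]
        · simp [hss]
      · rw [← psi_add]
        congr 1 <;> funext s
        · exact c1 s
        · exact c2 s

lemma smul_SS {j : Fin n} : ∀ {h : ℕ}, 1 ≤ h → h ≤ R → h • SS σ j 1 = SS σ j h := by
  intro h
  induction h with
  | zero => omega
  | succ m ih =>
    intro _ hm
    rcases Nat.eq_zero_or_pos m with hm0 | hm0
    · subst hm0; rw [one_nsmul]
    · rw [succ_nsmul, ih hm0 (by omega), SS_add σ hm]

lemma card_SS {j : Fin n} {h : ℕ} (hh : h ≤ R) :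
    (SS σ j h).card = ∑ i ∈ MM R h, ∏ s, (i s * aa σ j s + 1) := by
  unfold SS
  have hiR : ∀ i : Fin R → ℕ, i ∈ MM R h → ∀ s, i s ≤ R := by
    intro i hi s
    unfold MM at hi
    rw [Finset.mem_filter, Fintype.mem_piFinset] at hi
    have := hi.1 s
    rw [Finset.mem_range] at this
    omega
  rw [Finset.card_biUnion]
  · apply Finset.sum_congr rfl
    intro i hi
    rw [Finset.card_image_of_injOn, Fintype.card_piFinset]
    · apply Finset.prod_congr rfl
      intro s _
      rw [Finset.card_range]
    · intro y hy y' hy' heq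
      rw [Finset.mem_coe, Fintype.mem_piFinset] at hy hy'
      refine (psi_extract σ j (hiR i hi) (hiR i hi) (fun s => ?_) (fun s => ?_) heq).2
      · have := hy s; rw [Finset.mem_range] at this; omega
      · have := hy' s; rw [Finset.mem_range] at this; omega
  · intro i hi i' hi' hne
    rw [Function.onFun, Finset.disjoint_left]
    intro x hx hx'
    rw [Finset.mem_image] at hx hx'
    obtain ⟨y, hy, rfl⟩ := hx
    obtain ⟨y', hy', heq⟩ := hx'
    rw [Fintype.mem_piFinset] at hy hy'
    apply hne
    refine (psi_extract σ j (hiR i hi) (hiR i' hi') (fun s => ?_) (fun s => ?_) heq.symm).1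
    · have := hy s; rw [Finset.mem_range] at this; omega
    · have := hy' s; rw [Finset.mem_range] at this; omega


def VV (j : Fin n) (h : ℕ) : ℕ := ∑ i ∈ MM R h, ∏ s, (i s * aa σ j s + 1)

def ww (R h : ℕ) (S : Finset (Fin R)) : ℕ := ∑ i ∈ MM R h, ∏ s ∈ S, i s

def EE {R : ℕ} (U : Finset (Fin R)) : ℕ := ∑ s ∈ U, 2^(s.val)

def cc (j : Fin n) (h : ℕ) (U : Finset (Fin R)) : ℕ :=
  ∑ S ∈ (univ : Finset (Fin R)).powerset.filter (fun S => U ⊆ S), ww R h S * ∏ s ∈ S \ U, dd σ j s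

lemma V_expand (j : Fin n) (h : ℕ) :
    VV σ j h = ∑ U ∈ (univ : Finset (Fin R)).powerset, cc σ j h U * (Q n R)^(EE U) := by
  classical
  unfold VV
  have e1 : ∀ i : Fin R → ℕ, ∏ s, (i s * aa σ j s + 1)
      = ∑ S ∈ (univ : Finset (Fin R)).powerset, (∏ s ∈ S, i s) * ∏ s ∈ S, aa σ j s := by
    intro i
    rw [Finset.prod_add]
    apply Finset.sum_congr rfl
    intro S _
    rw [Finset.prod_const_one, mul_one, Finset.prod_mul_distrib]
  simp_rw [e1]
  rw [Finset.sum_comm]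
  have e2 : ∀ S : Finset (Fin R), ∑ i ∈ MM R h, (∏ s ∈ S, i s) * ∏ s ∈ S, aa σ j s
      = ww R h S * ∏ s ∈ S, aa σ j s := by
    intro S
    rw [ww, Finset.sum_mul]
  simp_rw [e2]
  have e3 : ∀ S : Finset (Fin R), ∏ s ∈ S, aa σ j s
      = ∑ U ∈ S.powerset, (Q n R)^(EE U) * ∏ s ∈ S \ U, dd σ j s := by
    intro S
    unfold aa T
    rw [Finset.prod_add]
    apply Finset.sum_congr rfl
    intro U _
    rw [Finset.prod_pow_eq_pow_sum]
    rfl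
  simp_rw [e3]
  have e4 : ∀ S : Finset (Fin R), ww R h S * ∑ U ∈ S.powerset, (Q n R)^(EE U) * ∏ s ∈ S \ U, dd σ j s
      = ∑ U ∈ S.powerset, (ww R h S * ∏ s ∈ S \ U, dd σ j s) * (Q n R)^(EE U) := by
    intro S
    rw [Finset.mul_sum]
    apply Finset.sum_congr rfl
    intro U _
    ring
  simp_rw [e4]
  rw [Finset.sum_comm' (t' := (univ : Finset (Fin R)).powerset)
    (s' := fun U => (univ : Finset (Fin R)).powerset.filter (fun S => U ⊆ S))]
  · apply Finset.sum_congr rfl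
    intro U _
    rw [cc, Finset.sum_mul]
  · intro S U
    simp only [Finset.mem_powerset, Finset.mem_filter]
    constructor
    · rintro ⟨h1, h2⟩
      exact ⟨⟨h1, h2⟩, le_trans h2 h1⟩
    · rintro ⟨⟨h1, h2⟩, h3⟩
      exact ⟨h1, h2⟩

lemma ww_eq_zero {h : ℕ} {S : Finset (Fin R)} (hS : h < S.card) : ww R h S = 0 := by
  apply Finset.sum_eq_zero
  intro i hi
  unfold MM at hi
  rw [Finset.mem_filter] at hi
  rw [Finset.prod_eq_zero_iff]
  by_contra hc
  push_neg at hc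
  have h1 : S.card ≤ ∑ s ∈ S, i s := by
    calc S.card = ∑ _s ∈ S, 1 := by rw [Finset.sum_const, smul_eq_mul, mul_one]
    _ ≤ ∑ s ∈ S, i s := Finset.sum_le_sum (fun s hs => by have := hc s hs; omega)
  have h2 : ∑ s ∈ S, i s ≤ ∑ s, i s :=
    Finset.sum_le_sum_of_subset (Finset.subset_univ S)
  omega

lemma ww_eq_one {h : ℕ} {S : Finset (Fin R)} (hS : S.card = h) : ww R h S = 1 := by
  classical
  set ind : Fin R → ℕ := fun s => if s ∈ S then 1 else 0 with hind
  have hindsum : ∑ s, ind s = h := by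
    rw [hind]
    simp only [Finset.sum_ite_mem, Finset.univ_inter, Finset.sum_const, smul_eq_mul, mul_one]
    exact hS
  have hindmem : ind ∈ MM R h := by
    unfold MM
    rw [Finset.mem_filter, Fintype.mem_piFinset]
    constructor
    · intro s
      rw [Finset.mem_range]
      have h1 : ind s ≤ ∑ s', ind s' :=
        Finset.single_le_sum (f := fun s' => ind s') (fun _ _ => Nat.zero_le _) (mem_univ s)
      omega
    · omega
  unfold ww
  rw [Finset.sum_eq_single ind]
  · rw [hind]
    apply Finset.prod_eq_one
    intro s hs
    simp [hs]
  · intro i hi hne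
    unfold MM at hi
    rw [Finset.mem_filter] at hi
    by_contra hc
    have hcz : ∀ s ∈ S, i s ≠ 0 := by
      intro s hs hz
      exact hc (Finset.prod_eq_zero hs hz)
    -- all coords on S are ≥ 1, sum over S is ≥ card S = h, total ≤ h
    have h1 : ∑ s ∈ S, i s ≤ ∑ s, i s := Finset.sum_le_sum_of_subset (Finset.subset_univ S)
    have h2 : S.card ≤ ∑ s ∈ S, i s := by
      calc S.card = ∑ _s ∈ S, 1 := by rw [Finset.sum_const, smul_eq_mul, mul_one]
      _ ≤ ∑ s ∈ S, i s := Finset.sum_le_sum (fun s hs => by have := hcz s hs; omega)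
    have hSsum : ∑ s ∈ S, i s = h := by omega
    have hoff : ∀ s, s ∉ S → i s = 0 := by
      intro s hs
      have e := Finset.sum_inter_add_sum_sdiff univ S (fun s => i s)
      have einter : univ ∩ S = S := by
        ext a; simp
      rw [einter, hSsum] at e
      have : ∑ s ∈ univ \ S, i s = 0 := by omega
      rw [Finset.sum_eq_zero_iff] at this
      exact this s (by rw [Finset.mem_sdiff]; exact ⟨mem_univ s, hs⟩)
    have hon : ∀ s ∈ S, i s = 1 := by
      by_contra hc2
      push_neg at hc2
      obtain ⟨s₀, hs₀, hs₀ne⟩ := hc2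
      have h3 : (∑ _s ∈ S, 1) < ∑ s ∈ S, i s := by
        apply Finset.sum_lt_sum
        · intro s hs; have := hcz s hs; omega
        · exact ⟨s₀, hs₀, by have := hcz s₀ hs₀; omega⟩
      rw [Finset.sum_const, smul_eq_mul, mul_one] at h3
      omega
    apply hne
    funext s
    by_cases hs : s ∈ S
    · rw [hon s hs, hind]; simp [hs]
    · rw [hoff s hs, hind]; simp [hs]
  · intro hc
    exact absurd hindmem hc

lemma ww_le {h : ℕ} (hh : h ≤ R) (S : Finset (Fin R)) : ww R h S ≤ (R+1)^R * R^R := by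
  unfold ww
  have hcard : (MM R h).card ≤ (h+1)^R := by
    unfold MM
    calc (Finset.filter _ _).card ≤ (Fintype.piFinset fun _ : Fin R => Finset.range (h+1)).card :=
      Finset.card_filter_le _ _
    _ = (h+1)^R := by
      rw [Fintype.card_piFinset]
      simp [Finset.card_range]
  have hterm : ∀ i ∈ MM R h, ∏ s ∈ S, i s ≤ R^R := by
    intro i hi
    unfold MM at hi
    rw [Finset.mem_filter, Fintype.mem_piFinset] at hi
    rcases Nat.eq_zero_or_pos R with hR0 | hR0
    · subst hR0
      have : S = ∅ := Finset.eq_empty_of_isEmpty S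
      rw [this]
      simp
    · calc ∏ s ∈ S, i s ≤ ∏ _s ∈ S, R := by
            apply Finset.prod_le_prod (fun _ _ => Nat.zero_le _)
            intro s hs
            have := hi.1 s
            rw [Finset.mem_range] at this
            omega
      _ = R^(S.card) := by rw [Finset.prod_const]
      _ ≤ R^R := Nat.pow_le_pow_right hR0 (le_trans (Finset.card_le_univ S) (by simp))
  calc ∑ i ∈ MM R h, ∏ s ∈ S, i s ≤ ∑ _i ∈ MM R h, R^R := Finset.sum_le_sum hterm
  _ = (MM R h).card * R^R := by rw [Finset.sum_const, smul_eq_mul]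
  _ ≤ (h+1)^R * R^R := Nat.mul_le_mul_right _ hcard
  _ ≤ (R+1)^R * R^R := Nat.mul_le_mul_right _ (Nat.pow_le_pow_left (by omega) _)

lemma cc_le (j : Fin n) {h : ℕ} (hn : 1 ≤ n) (hh : h ≤ R) (U : Finset (Fin R)) :
    cc σ j h U ≤ C0 n R := by
  unfold cc
  have hterm : ∀ S ∈ (univ : Finset (Fin R)).powerset.filter (fun S => U ⊆ S),
      ww R h S * ∏ s ∈ S \ U, dd σ j s ≤ ((R+1)^R * R^R) * (D n R)^R := by
    intro S _
    apply Nat.mul_le_mul (ww_le hh S)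
    calc ∏ s ∈ S \ U, dd σ j s ≤ ∏ _s ∈ S \ U, D n R :=
      Finset.prod_le_prod (fun _ _ => Nat.zero_le _) (fun s _ => dd_le σ j s)
    _ = (D n R)^((S \ U).card) := by rw [Finset.prod_const]
    _ ≤ (D n R)^R := Nat.pow_le_pow_right (D_ge n R hn)
        (le_trans (Finset.card_le_univ _) (by simp))
  calc ∑ S ∈ _, ww R h S * ∏ s ∈ S \ U, dd σ j s
      ≤ ∑ _S ∈ (univ : Finset (Fin R)).powerset.filter (fun S => U ⊆ S), ((R+1)^R * R^R) * (D n R)^R :=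
        Finset.sum_le_sum hterm
  _ = ((univ : Finset (Fin R)).powerset.filter (fun S => U ⊆ S)).card * (((R+1)^R * R^R) * (D n R)^R) := by
        rw [Finset.sum_const, smul_eq_mul]
  _ ≤ 2^R * (((R+1)^R * R^R) * (D n R)^R) := by
        apply Nat.mul_le_mul_right
        calc ((univ : Finset (Fin R)).powerset.filter (fun S => U ⊆ S)).card
            ≤ ((univ : Finset (Fin R)).powerset).card := Finset.card_filter_le _ _
        _ = 2^R := by rw [Finset.card_powerset]; simp
  _ = C0 n R := by unfold C0; ring

lemma cc_high (j : Fin n) {h : ℕ} {U : Finset (Fin R)} (hU : h ≤ U.card) :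
    cc σ j h U = ww R h U := by
  unfold cc
  rw [Finset.sum_eq_single U]
  · simp
  · intro S hS hne
    rw [Finset.mem_filter, Finset.mem_powerset] at hS
    have hUS : U ⊂ S := lt_of_le_of_ne hS.2 (by intro e; exact hne e.symm)
    have : U.card < S.card := Finset.card_lt_card hUS
    rw [ww_eq_zero (by omega)]
    ring
  · intro hc
    exfalso
    apply hc
    rw [Finset.mem_filter, Finset.mem_powerset]
    exact ⟨Finset.subset_univ U, Finset.Subset.refl U⟩


def Low (R r : ℕ) : Finset (Fin R) := univ.filter fun s => s.val + r ≤ R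
def Ustar (R r : ℕ) : Finset (Fin R) := univ.filter fun s => R < s.val + r

lemma two_pow_range (K : ℕ) : ∑ v ∈ Finset.range K, 2^v = 2^K - 1 := by
  induction K with
  | zero => simp
  | succ m ih =>
    rw [Finset.sum_range_succ, ih]
    have h1 : (1:ℕ) ≤ 2^m := Nat.one_le_two_pow
    have h2 : (2:ℕ)^(m+1) = 2^m + 2^m := by rw [pow_succ]; ring
    omega

lemma card_filter_val_lt {K : ℕ} (hK : K ≤ R) :
    ((univ : Finset (Fin R)).filter (fun s => s.val < K)).card = K := by
  rcases Nat.eq_zero_or_pos K with h0 | h0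
  · subst h0
    rw [Finset.filter_false_of_mem (fun s _ => by omega)]
    simp
  · have hR : 0 < R := by omega
    have key : ((univ : Finset (Fin R)).filter (fun s => s.val < K)).card = (Finset.range K).card := by
      apply Finset.card_nbij' (i := fun s => s.val) (j := fun v => ⟨v % R, Nat.mod_lt _ hR⟩)
      · intro s hs
        rw [Finset.mem_coe, Finset.mem_filter] at hs
        rw [Finset.mem_coe, Finset.mem_range]
        exact hs.2
      · intro v hv
        rw [Finset.mem_coe, Finset.mem_range] at hv
        rw [Finset.mem_coe, Finset.mem_filter]
        refine ⟨mem_univ _, ?_⟩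
        simp only []
        rw [Nat.mod_eq_of_lt (by omega)]
        omega
      · intro s hs
        rw [Finset.mem_coe, Finset.mem_filter] at hs
        apply Fin.ext
        simp only []
        rw [Nat.mod_eq_of_lt (by omega)]
      · intro v hv
        rw [Finset.mem_coe, Finset.mem_range] at hv
        simp only []
        rw [Nat.mod_eq_of_lt (by omega)]
    rw [key, Finset.card_range]

lemma card_Low {r : ℕ} (h1 : 1 ≤ r) (h2 : r ≤ R) : (Low R r).card = R - r + 1 := by
  unfold Low
  have e : (univ : Finset (Fin R)).filter (fun s => s.val + r ≤ R)
      = (univ : Finset (Fin R)).filter (fun s => s.val < R - r + 1) := by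
    apply Finset.filter_congr
    intro s _
    constructor <;> (intro; omega)
  rw [e, card_filter_val_lt (by omega)]

lemma sum_Low_dd (j : Fin n) {r : ℕ} (h1 : 1 ≤ r) (h2 : r ≤ R) :
    ∑ s ∈ Low R r, dd σ j s = g σ j r := by
  classical
  have hKR : R - r + 1 ≤ R := by omega
  have hmono : Monotone (fun v => g σ j (R + 1 - v)) := by
    intro v v' hv
    exact g_anti' σ j (by omega)
  have e1 : ∑ s ∈ Low R r, dd σ j s
      = ∑ v ∈ range R, (if v + r ≤ R then (g σ j (R - v) - g σ j (R - v + 1)) else 0) := by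
    unfold Low dd
    rw [Finset.sum_filter]
    exact Fin.sum_univ_eq_sum_range
      (fun v => if v + r ≤ R then (g σ j (R - v) - g σ j (R - v + 1)) else 0) R
  have e2 : ∑ v ∈ range R, (if v + r ≤ R then (g σ j (R - v) - g σ j (R - v + 1)) else 0)
      = ∑ v ∈ range (R - r + 1), (g σ j (R - v) - g σ j (R - v + 1)) := by
    rw [← Finset.sum_filter]
    apply Finset.sum_congr
    · ext v; simp only [mem_filter, mem_range]; omega
    · intros; rfl
  have e3 : ∑ v ∈ range (R - r + 1), (g σ j (R - v) - g σ j (R - v + 1))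
      = ∑ v ∈ range (R - r + 1), ((fun v => g σ j (R + 1 - v)) (v+1) - (fun v => g σ j (R + 1 - v)) v) := by
    apply Finset.sum_congr rfl
    intro v hv
    have hv' : v < R - r + 1 := mem_range.mp hv
    have ea : R + 1 - (v+1) = R - v := by omega
    have eb : R + 1 - v = R - v + 1 := by omega
    simp only [ea, eb]
  rw [e1, e2, e3, Finset.sum_range_tsub hmono]
  show g σ j (R + 1 - (R - r + 1)) - g σ j (R + 1 - 0) = _
  have ec : R + 1 - (R - r + 1) = r := by omega
  have ed : R + 1 - 0 = R + 1 := by omega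
  rw [ec, ed, g_top]
  omega


lemma card_Ustar {r : ℕ} (h1 : 1 ≤ r) (h2 : r ≤ R) : (Ustar R r).card = r - 1 := by
  have key := Finset.card_filter_add_card_filter_not
    (s := (univ : Finset (Fin R))) (p := fun s => s.val + r ≤ R)
  have e : (univ : Finset (Fin R)).filter (fun s => ¬ (s.val + r ≤ R)) = Ustar R r := by
    unfold Ustar
    apply Finset.filter_congr
    intro s _
    constructor <;> (intro; omega)
  rw [e] at key
  have hlow : (Low R r).card = R - r + 1 := card_Low h1 h2
  unfold Low at hlow
  have hu : (univ : Finset (Fin R)).card = R := by simp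
  omega

lemma sum_Low_pow {r : ℕ} (h1 : 1 ≤ r) (h2 : r ≤ R) :
    ∑ s ∈ Low R r, 2^(s.val) = 2^(R - r + 1) - 1 := by
  unfold Low
  rw [Finset.sum_filter]
  rw [Fin.sum_univ_eq_sum_range (fun v => if v + r ≤ R then 2^v else 0) R]
  have e : ∑ v ∈ Finset.range R, (if v + r ≤ R then 2^v else 0)
      = ∑ v ∈ Finset.range (R - r + 1), 2^v := by
    rw [← Finset.sum_filter]
    apply Finset.sum_congr
    · ext v; simp only [Finset.mem_filter, Finset.mem_range]; omega
    · intros; rfl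
  rw [e, two_pow_range]

lemma EE_lt_star {r : ℕ} (h1 : 1 ≤ r) (h2 : r ≤ R) {U : Finset (Fin R)}
    (hne : U ≠ Ustar R r) (hcard : U.card < r) : EE U < EE (Ustar R r) := by
  classical
  have hstar_card : (Ustar R r).card = r - 1 := card_Ustar h1 h2
  by_cases hsub : U ⊆ Ustar R r
  · have hss : U ⊂ Ustar R r := lt_of_le_of_ne hsub hne
    obtain ⟨x, hxU, hxnU⟩ := Finset.exists_of_ssubset hss
    have hsub2 : U ⊆ (Ustar R r).erase x := Finset.subset_erase.mpr ⟨hsub, hxnU⟩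
    have e1 : EE U ≤ EE ((Ustar R r).erase x) :=
      Finset.sum_le_sum_of_subset hsub2
    have e2 : 2^(x.val) + EE ((Ustar R r).erase x) = EE (Ustar R r) := by
      unfold EE
      exact Finset.add_sum_erase _ (fun s => 2^(s.val)) hxU
    have : (1:ℕ) ≤ 2^(x.val) := Nat.one_le_two_pow
    unfold EE at *
    omega
  · rw [Finset.not_subset] at hsub
    obtain ⟨s₀, hs₀U, hs₀n⟩ := hsub
    have hsplit : EE (U ∩ Ustar R r) + EE (U \ Ustar R r) = EE U :=
      Finset.sum_inter_add_sum_sdiff _ _ _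
    have hproper : ¬ (Ustar R r ⊆ U ∩ Ustar R r) := by
      intro hcon
      have h3 : insert s₀ (Ustar R r) ⊆ U := by
        intro z hz
        rw [Finset.mem_insert] at hz
        rcases hz with rfl | hz
        · exact hs₀U
        · exact (Finset.mem_inter.mp (hcon hz)).1
      have h4 : (insert s₀ (Ustar R r)).card = r := by
        rw [Finset.card_insert_of_notMem hs₀n, hstar_card]
        omega
      have := Finset.card_le_card h3
      omega
    rw [Finset.not_subset] at hproper
    obtain ⟨x, hxU, hxn⟩ := hproper
    have hxnUi : x ∉ U ∩ Ustar R r := hxn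
    have e1 : EE (U ∩ Ustar R r) ≤ EE ((Ustar R r).erase x) :=
      Finset.sum_le_sum_of_subset (Finset.subset_erase.mpr ⟨Finset.inter_subset_right, hxnUi⟩)
    have e2 : 2^(x.val) + EE ((Ustar R r).erase x) = EE (Ustar R r) := by
      unfold EE
      exact Finset.add_sum_erase _ (fun s => 2^(s.val)) hxU
    have e3 : 2^(R - r + 1) ≤ 2^(x.val) := by
      apply Nat.pow_le_pow_right (by norm_num)
      unfold Ustar at hxU
      rw [Finset.mem_filter] at hxU
      omega
    have e4 : EE (U \ Ustar R r) ≤ 2^(R - r + 1) - 1 := by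
      rw [← sum_Low_pow h1 h2]
      apply Finset.sum_le_sum_of_subset
      intro z hz
      rw [Finset.mem_sdiff] at hz
      have h6 : ¬ (R < z.val + r) := by
        intro hcon
        exact hz.2 (by unfold Ustar; rw [Finset.mem_filter]; exact ⟨mem_univ _, hcon⟩)
      unfold Low
      rw [Finset.mem_filter]
      exact ⟨mem_univ _, by omega⟩
    have e5 : (1:ℕ) ≤ 2^(R-r+1) := Nat.one_le_two_pow
    omega

lemma cc_star (j : Fin n) {r : ℕ} (h1 : 1 ≤ r) (h2 : r ≤ R) :
    cc σ j r (Ustar R r) = ww R r (Ustar R r) + ∑ s ∈ Low R r, dd σ j s := by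
  classical
  have hdisj : ∀ X : Finset (Fin R), X ⊆ Low R r → Disjoint (Ustar R r) X := by
    intro X hX
    rw [Finset.disjoint_left]
    intro z hz hzX
    have := hX hzX
    unfold Ustar at hz
    unfold Low at this
    rw [Finset.mem_filter] at hz this
    omega
  have step1 : cc σ j r (Ustar R r)
      = ∑ X ∈ (Low R r).powerset, ww R r (Ustar R r ∪ X) * ∏ s ∈ X, dd σ j s := by
    unfold cc
    apply Finset.sum_nbij' (i := fun S => S \ Ustar R r) (j := fun X => Ustar R r ∪ X)
    · intro S hS
      rw [Finset.mem_filter] at hS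
      rw [Finset.mem_powerset]
      intro z hz
      rw [Finset.mem_sdiff] at hz
      unfold Ustar at hz
      unfold Low
      rw [Finset.mem_filter] at hz ⊢
      refine ⟨mem_univ _, ?_⟩
      have h3 := hz.2
      have h4 : ¬ (R < z.val + r) := by
        intro hcon
        exact h3 ⟨mem_univ _, hcon⟩
      omega
    · intro X hX
      rw [Finset.mem_powerset] at hX
      rw [Finset.mem_filter, Finset.mem_powerset]
      exact ⟨Finset.subset_univ _, Finset.subset_union_left⟩
    · intro S hS
      rw [Finset.mem_filter] at hS
      exact Finset.union_sdiff_of_subset hS.2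
    · intro X hX
      rw [Finset.mem_powerset] at hX
      exact Finset.union_sdiff_cancel_left (hdisj X hX)
    · intro S hS
      rw [Finset.mem_filter] at hS
      rw [Finset.union_sdiff_of_subset hS.2]
  rw [step1]
  -- now restrict to small X
  set G : Finset (Fin R) → ℕ := fun X => ww R r (Ustar R r ∪ X) * ∏ s ∈ X, dd σ j s with hG
  have hzero : ∀ X ∈ (Low R r).powerset, 2 ≤ X.card → G X = 0 := by
    intro X hX hX2
    rw [Finset.mem_powerset] at hX
    have hcard : (Ustar R r ∪ X).card = (r-1) + X.card := by
      rw [Finset.card_union_of_disjoint (hdisj X hX), card_Ustar h1 h2]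
    rw [hG]
    simp only []
    rw [ww_eq_zero (by omega)]
    ring
  set P1 := (Low R r).powerset.filter (fun X => X.card ≤ 1) with hP1
  have hrestrict : ∑ X ∈ (Low R r).powerset, G X = ∑ X ∈ P1, G X := by
    symm
    apply Finset.sum_subset
    · rw [hP1]; exact Finset.filter_subset _ _
    · intro X hX hXn
      apply hzero X hX
      by_contra hcon
      exact hXn (by rw [hP1, Finset.mem_filter]; exact ⟨hX, by omega⟩)
  have hP1eq : P1 = insert ∅ ((Low R r).image (fun s => ({s} : Finset (Fin R)))) := by
    ext X
    rw [hP1, Finset.mem_filter, Finset.mem_powerset, Finset.mem_insert, Finset.mem_image]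
    constructor
    · rintro ⟨hsub, hc⟩
      interval_cases h : X.card
      · left; exact Finset.card_eq_zero.mp h
      · right
        obtain ⟨a, rfl⟩ := Finset.card_eq_one.mp h
        exact ⟨a, hsub (Finset.mem_singleton_self a), rfl⟩
    · rintro (rfl | ⟨a, ha, rfl⟩)
      · exact ⟨Finset.empty_subset _, by simp⟩
      · exact ⟨Finset.singleton_subset_iff.mpr ha, by simp⟩
  have hnotmem : (∅ : Finset (Fin R)) ∉ (Low R r).image (fun s => ({s} : Finset (Fin R))) := by
    rw [Finset.mem_image]
    rintro ⟨a, -, hcon⟩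
    exact (Finset.singleton_ne_empty a) hcon
  rw [hrestrict, hP1eq, Finset.sum_insert hnotmem, Finset.sum_image
    (fun x _ y _ h => Finset.singleton_inj.mp h)]
  have hGempty : G ∅ = ww R r (Ustar R r) := by
    rw [hG]; simp
  have hGsingle : ∀ s ∈ Low R r, G {s} = dd σ j s := by
    intro s hs
    rw [hG]
    simp only [Finset.prod_singleton]
    have hcard : (Ustar R r ∪ {s}).card = r := by
      rw [Finset.card_union_of_disjoint (hdisj {s} (Finset.singleton_subset_iff.mpr hs)),
        card_Ustar h1 h2]
      simp
      omega
    rw [ww_eq_one hcard, one_mul]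
  rw [hGempty]
  congr 1
  apply Finset.sum_congr rfl hGsingle


lemma cc_dichotomy (j l : Fin n) {r : ℕ} (h1 : 1 ≤ r) (h2 : r ≤ R)
    {U : Finset (Fin R)} (hne : U ≠ Ustar R r) :
    cc σ j r U = cc σ l r U ∨ EE U < EE (Ustar R r) := by
  by_cases hcard : r ≤ U.card
  · left
    rw [cc_high σ j hcard, cc_high σ l hcard]
  · right
    exact EE_lt_star h1 h2 hne (by omega)

lemma VV_lt (hn : 1 ≤ n) {j l : Fin n} {r : ℕ} (h1 : 1 ≤ r) (h2 : r ≤ R)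
    (hu : g σ j r < g σ l r) : VV σ j r < VV σ l r := by
  classical
  have hQ2 : 2 ≤ Q n R := Q_ge_two n R
  have hUsP : Ustar R r ∈ (univ : Finset (Fin R)).powerset :=
    Finset.mem_powerset.mpr (Finset.subset_univ _)
  set Δ : Finset (Fin R) → ℤ := fun U => ((cc σ l r U : ℤ) - cc σ j r U) with hΔ
  have hdiff : (VV σ l r : ℤ) - (VV σ j r : ℤ)
      = ∑ U ∈ (univ : Finset (Fin R)).powerset, Δ U * (Q n R : ℤ)^(EE U) := by
    rw [V_expand σ l r, V_expand σ j r]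
    push_cast
    rw [← Finset.sum_sub_distrib]
    apply Finset.sum_congr rfl
    intro U _
    ring
  have hsplit : ∑ U ∈ (univ : Finset (Fin R)).powerset, Δ U * (Q n R : ℤ)^(EE U)
      = Δ (Ustar R r) * (Q n R : ℤ)^(EE (Ustar R r))
        + ∑ U ∈ ((univ : Finset (Fin R)).powerset).erase (Ustar R r), Δ U * (Q n R : ℤ)^(EE U) :=
    (Finset.add_sum_erase _ _ hUsP).symm
  have hΔstar : Δ (Ustar R r) = (g σ l r : ℤ) - (g σ j r : ℤ) := by
    rw [hΔ]
    simp only []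
    rw [cc_star σ l h1 h2, cc_star σ j h1 h2, sum_Low_dd σ l h1 h2, sum_Low_dd σ j h1 h2]
    push_cast
    ring
  have hΔstar1 : 1 ≤ Δ (Ustar R r) := by rw [hΔstar]; omega
  have hQpos : (0:ℤ) < (Q n R : ℤ) := by exact_mod_cast (by omega : 0 < Q n R)
  have goalpos : 0 < (VV σ l r : ℤ) - (VV σ j r : ℤ) := by
    rw [hdiff, hsplit]
    by_cases hE0 : EE (Ustar R r) = 0
    · have hz : ∀ U ∈ ((univ : Finset (Fin R)).powerset).erase (Ustar R r),
          Δ U * (Q n R : ℤ)^(EE U) = 0 := by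
        intro U hU
        rw [Finset.mem_erase] at hU
        rcases cc_dichotomy σ j l h1 h2 (hU.1) with hcc | hlt
        · rw [hΔ]; simp only []; rw [hcc]; ring
        · omega
      rw [Finset.sum_eq_zero hz, hE0]
      simp only [pow_zero, mul_one, add_zero]
      omega
    · have hE1 : 1 ≤ EE (Ustar R r) := by omega
      have hBnn : (0:ℤ) ≤ (C0 n R : ℤ) * (Q n R : ℤ)^(EE (Ustar R r) - 1) := by positivity
      have hterm : ∀ U ∈ ((univ : Finset (Fin R)).powerset).erase (Ustar R r),
          -((C0 n R : ℤ) * (Q n R : ℤ)^(EE (Ustar R r) - 1)) ≤ Δ U * (Q n R : ℤ)^(EE U) := by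
        intro U hU
        rw [Finset.mem_erase] at hU
        rcases cc_dichotomy σ j l h1 h2 (hU.1) with hcc | hlt
        · rw [hΔ]; simp only []; rw [hcc]
          have e : ((cc σ l r U : ℤ) - cc σ l r U) = 0 := by ring
          rw [e, zero_mul]
          omega
        · have hD1 : -(C0 n R : ℤ) ≤ Δ U := by
            rw [hΔ]
            simp only []
            have hle : cc σ j r U ≤ C0 n R := cc_le σ j hn h2 U
            have hnn : (0:ℤ) ≤ (cc σ l r U : ℤ) := by positivity
            have hc : (cc σ j r U : ℤ) ≤ (C0 n R : ℤ) := by exact_mod_cast hle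
            omega
          have hq1 : (Q n R : ℤ)^(EE U) ≤ (Q n R : ℤ)^(EE (Ustar R r) - 1) := by
            apply pow_le_pow_right₀ (by omega) (by omega)
          have hq0 : (0:ℤ) ≤ (Q n R : ℤ)^(EE U) := by positivity
          calc -((C0 n R : ℤ) * (Q n R : ℤ)^(EE (Ustar R r) - 1))
              = -(C0 n R : ℤ) * (Q n R : ℤ)^(EE (Ustar R r) - 1) := by ring
          _ ≤ -(C0 n R : ℤ) * (Q n R : ℤ)^(EE U) := by
              apply mul_le_mul_of_nonpos_left hq1
              have hcnn : (0:ℤ) ≤ (C0 n R : ℤ) := by positivity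
              omega
          _ ≤ Δ U * (Q n R : ℤ)^(EE U) := mul_le_mul_of_nonneg_right hD1 hq0
      have hsum : -((2:ℤ)^R * ((C0 n R : ℤ) * (Q n R : ℤ)^(EE (Ustar R r) - 1)))
          ≤ ∑ U ∈ ((univ : Finset (Fin R)).powerset).erase (Ustar R r), Δ U * (Q n R : ℤ)^(EE U) := by
        have h3 : ∑ _U ∈ ((univ : Finset (Fin R)).powerset).erase (Ustar R r),
            (-((C0 n R : ℤ) * (Q n R : ℤ)^(EE (Ustar R r) - 1)))
            ≤ ∑ U ∈ ((univ : Finset (Fin R)).powerset).erase (Ustar R r), Δ U * (Q n R : ℤ)^(EE U) :=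
          Finset.sum_le_sum hterm
        have h4 : ∑ _U ∈ ((univ : Finset (Fin R)).powerset).erase (Ustar R r),
            (-((C0 n R : ℤ) * (Q n R : ℤ)^(EE (Ustar R r) - 1)))
            = -(((((univ : Finset (Fin R)).powerset).erase (Ustar R r)).card : ℤ)
                * ((C0 n R : ℤ) * (Q n R : ℤ)^(EE (Ustar R r) - 1))) := by
          rw [Finset.sum_const, nsmul_eq_mul]
          ring
        have h5 : (((((univ : Finset (Fin R)).powerset).erase (Ustar R r)).card : ℤ)) ≤ 2^R := by
          have c1 : (((univ : Finset (Fin R)).powerset).erase (Ustar R r)).card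
              ≤ ((univ : Finset (Fin R)).powerset).card :=
            Finset.card_le_card (Finset.erase_subset _ _)
          have c2 : ((univ : Finset (Fin R)).powerset).card = 2^R := by
            rw [Finset.card_powerset]
            simp
          have c3 : (((univ : Finset (Fin R)).powerset).erase (Ustar R r)).card ≤ 2^R := by omega
          exact_mod_cast c3
        have h6 : -((2:ℤ)^R * ((C0 n R : ℤ) * (Q n R : ℤ)^(EE (Ustar R r) - 1)))
            ≤ -(((((univ : Finset (Fin R)).powerset).erase (Ustar R r)).card : ℤ)
                * ((C0 n R : ℤ) * (Q n R : ℤ)^(EE (Ustar R r) - 1))) := by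
          have := mul_le_mul_of_nonneg_right h5 hBnn
          omega
        calc -((2:ℤ)^R * ((C0 n R : ℤ) * (Q n R : ℤ)^(EE (Ustar R r) - 1)))
            ≤ -(((((univ : Finset (Fin R)).powerset).erase (Ustar R r)).card : ℤ)
                * ((C0 n R : ℤ) * (Q n R : ℤ)^(EE (Ustar R r) - 1))) := h6
        _ = ∑ _U ∈ ((univ : Finset (Fin R)).powerset).erase (Ustar R r),
            (-((C0 n R : ℤ) * (Q n R : ℤ)^(EE (Ustar R r) - 1))) := h4.symm
        _ ≤ _ := h3
      have hmain : (2:ℤ)^R * ((C0 n R : ℤ) * (Q n R : ℤ)^(EE (Ustar R r) - 1)) + 1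
          ≤ Δ (Ustar R r) * (Q n R : ℤ)^(EE (Ustar R r)) := by
        have e1 : (Q n R : ℤ)^(EE (Ustar R r)) = (Q n R : ℤ)^(EE (Ustar R r) - 1) * (Q n R : ℤ) := by
          rw [← pow_succ]
          congr 1
          omega
        have e2 : (Q n R : ℤ) = 2^R * (C0 n R : ℤ) + 2 := by
          have e : Q n R = 2^R * C0 n R + 2 := rfl
          exact_mod_cast e
        have hp1 : (1:ℤ) ≤ (Q n R : ℤ)^(EE (Ustar R r) - 1) := one_le_pow₀ (by omega)
        calc (2:ℤ)^R * ((C0 n R : ℤ) * (Q n R : ℤ)^(EE (Ustar R r) - 1)) + 1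
            = 2^R * (C0 n R : ℤ) * (Q n R : ℤ)^(EE (Ustar R r) - 1) + 1 := by ring
        _ ≤ 2^R * (C0 n R : ℤ) * (Q n R : ℤ)^(EE (Ustar R r) - 1)
              + 2 * (Q n R : ℤ)^(EE (Ustar R r) - 1) := by
            have hcnn : (0:ℤ) ≤ 2^R * (C0 n R : ℤ) * (Q n R : ℤ)^(EE (Ustar R r) - 1) := by positivity
            omega
        _ = (Q n R : ℤ)^(EE (Ustar R r) - 1) * (2^R * (C0 n R : ℤ) + 2) := by ring
        _ = (Q n R : ℤ)^(EE (Ustar R r)) := by rw [e1, e2]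
        _ = 1 * (Q n R : ℤ)^(EE (Ustar R r)) := by ring
        _ ≤ Δ (Ustar R r) * (Q n R : ℤ)^(EE (Ustar R r)) := by
            apply mul_le_mul_of_nonneg_right hΔstar1 (by positivity)
      omega
  have hfin : (VV σ j r : ℤ) < (VV σ l r : ℤ) := by omega
  exact_mod_cast hfin

end Sigma
end ItSum


open ItSum in
/-- **Theorem (alternative approach).** For all `n, R ≥ 1` there exist natural numbers
`h_1 < ⋯ < h_R` such that for any permutations `σ_1, …, σ_R` of `{1, …, n}` there exist
finite nonempty subsets `A_1, …, A_n ⊆ ℤ` with `|h_r A_1|, …, |h_r A_n|` in the same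
relative order as `σ_r` for each `1 ≤ r ≤ R`. -/
theorem exists_h_sequence_integers (n R : ℕ) (hn : 1 ≤ n) (hR : 1 ≤ R) :
    ∃ h : Fin R → ℕ, StrictMono h ∧ (∀ r, 1 ≤ h r) ∧
      ∀ σ : Fin R → Equiv.Perm (Fin n),
        ∃ A : Fin n → Finset ℤ,
          (∀ k, (A k).Nonempty) ∧
          ∀ r : Fin R, ∀ j k : Fin n,
            (h r • A j).card < (h r • A k).card ↔ σ r j < σ r k := by
  refine ⟨fun r => r.val + 1, ?_, ?_, ?_⟩
  · intro a b hab
    have := Fin.lt_def.mp hab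
    show a.val + 1 < b.val + 1
    omega
  · intro r
    show 1 ≤ r.val + 1
    omega
  · intro σ
    refine ⟨fun j => SS σ j 1, ?_, ?_⟩
    · intro k
      exact ⟨ψ n (fun _ => 0) (fun _ => 0),
        (mem_SS σ).mpr ⟨fun _ => 0, fun _ => 0, by simp, fun s => by simp, rfl⟩⟩
    · intro r j k
      have hr1 : 1 ≤ r.val + 1 := by omega
      have hr2 : r.val + 1 ≤ R := by have := r.isLt; omega
      have hcard : ∀ m : Fin n, ((r.val + 1) • SS σ m 1).card = VV σ m (r.val+1) := by
        intro m
        rw [smul_SS σ hr1 hr2, card_SS σ hr2]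
        rfl
      show ((r.val + 1) • SS σ j 1).card < ((r.val + 1) • SS σ k 1).card ↔ σ r j < σ r k
      rw [hcard j, hcard k]
      have hg : ∀ m : Fin n, g σ m (r.val+1) = n * (R - (r.val+1)) + ((σ r) m : ℕ) := by
        intro m
        unfold g
        rw [dif_pos (by omega : r.val + 1 - 1 < R)]
        have e : (⟨r.val + 1 - 1, by omega⟩ : Fin R) = r := by
          apply Fin.ext
          simp
        rw [e]
      rcases lt_trichotomy ((σ r) j) ((σ r) k) with hlt | heq | hgt
      · have hVV : VV σ j (r.val+1) < VV σ k (r.val+1) := by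
          apply VV_lt σ hn hr1 hr2
          rw [hg j, hg k]
          have := Fin.lt_def.mp hlt
          omega
        exact ⟨fun _ => hlt, fun _ => hVV⟩
      · have hjk : j = k := (σ r).injective heq
        subst hjk
        exact ⟨fun hcon => absurd hcon (lt_irrefl _), fun hcon => absurd hcon (lt_irrefl _)⟩
      · have hVV : VV σ k (r.val+1) < VV σ j (r.val+1) := by
          apply VV_lt σ hn hr1 hr2
          rw [hg j, hg k]
          have := Fin.lt_def.mp hgt
          omega
        exact ⟨fun hcon => absurd hcon (not_lt.mpr hVV.le), fun hcon => absurd hcon (not_lt.mpr hgt.le)⟩
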